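/- For every integer k ≥ 1 and every real x with 0 < x < π, the inequality c_k · sin(x)^k ≤ M_k · g_k(x) holds, where c_k = Γ(k/2 + 1) / (√π · Γ(k/2 + 1/2)), g_k(x) = x^k (π − x)^k / (B(k+1, k+1) · π^(2k+1)) with B the Euler beta function, and M_k = √π · 2^(k−1) · Γ(k/2 + 1)^2 / Γ(k + 3/2). -/

import Mathlib

open Real

/-- Chord inequality for `sin` on `[0, π/4]`, from concavity. -/
lemma sin_chord_quarter {u : ℝ} (hu0 : 0 ≤ u) (hu : u ≤ π / 4) :
    2 * Real.sqrt 2 / π * u ≤ Real.sin u := by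
  have hπ := Real.pi_pos
  have h4 : (0:ℝ) < π / 4 := by linarith
  have hmem0 : (0:ℝ) ∈ Set.Icc 0 π := ⟨le_rfl, hπ.le⟩
  have hmem4 : (π/4 : ℝ) ∈ Set.Icc 0 π := ⟨h4.le, by linarith⟩
  have ha : (0:ℝ) ≤ 1 - u / (π/4) := by
    rw [sub_nonneg, div_le_one h4]; exact hu
  have hb : (0:ℝ) ≤ u / (π/4) := div_nonneg hu0 h4.le
  have hsum : (1 - u / (π/4)) + u / (π/4) = 1 := by ring
  have := strictConcaveOn_sin_Icc.concaveOn.2 hmem0 hmem4 ha hb hsum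
  simp only [smul_eq_mul, mul_zero, Real.sin_zero, zero_add] at this
  rw [Real.sin_pi_div_four] at this
  have harg : u / (π/4) * (π/4) = u := by field_simp
  rw [harg] at this
  calc 2 * Real.sqrt 2 / π * u = u / (π/4) * (Real.sqrt 2 / 2) := by
        field_simp; ring
    _ ≤ Real.sin u := this

/-- The key analytic inequality: `sin x ≤ (4/π²) x (π - x)` on `(0, π)`. -/
lemma sin_le_parab {x : ℝ} (hx0 : 0 < x) (hxπ : x < π) :
    Real.sin x ≤ 4 / π ^ 2 * (x * (π - x)) := by
  have hπ := Real.pi_pos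
  obtain ⟨t, ht⟩ : ∃ t, t = x - π / 2 := ⟨_, rfl⟩
  have hx : x = t + π / 2 := by rw [ht]; ring
  have habs : |t| < π / 2 := abs_lt.2 ⟨by rw [ht]; linarith, by rw [ht]; linarith⟩
  have hchord : 2 * Real.sqrt 2 / π * (|t| / 2) ≤ Real.sin (|t| / 2) :=
    sin_chord_quarter (by positivity) (by linarith [abs_nonneg t])
  have hs2 : Real.sqrt 2 * Real.sqrt 2 = 2 := Real.mul_self_sqrt (by norm_num)
  have habs2 : |t| * |t| = t ^ 2 := by rw [← abs_mul, abs_mul_self]; ring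
  have hmul : (2 * Real.sqrt 2 / π * (|t| / 2)) * (2 * Real.sqrt 2 / π * (|t| / 2))
      = 2 * t ^ 2 / π ^ 2 := by
    have h : (2 * Real.sqrt 2 / π * (|t| / 2)) * (2 * Real.sqrt 2 / π * (|t| / 2))
        = (Real.sqrt 2 * Real.sqrt 2) * (|t| * |t|) / π ^ 2 := by ring
    rw [h, hs2, habs2]
  have h1 : (0:ℝ) ≤ 2 * Real.sqrt 2 / π * (|t| / 2) := by positivity
  have hsq : 2 * t ^ 2 / π ^ 2 ≤ Real.sin (|t| / 2) ^ 2 := by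
    have h2 := mul_self_le_mul_self h1 hchord
    rw [hmul] at h2
    calc 2 * t ^ 2 / π ^ 2 ≤ Real.sin (|t| / 2) * Real.sin (|t| / 2) := h2
      _ = Real.sin (|t| / 2) ^ 2 := (sq (Real.sin (|t|/2))).symm
  have hsin_sq : Real.sin (|t| / 2) ^ 2 = Real.sin (t / 2) ^ 2 := by
    rcases abs_cases t with ⟨h, _⟩ | ⟨h, _⟩
    · rw [h]
    · rw [h, show -t / 2 = -(t/2) by ring, Real.sin_neg]; ring
  have hcos : Real.cos t = 1 - 2 * Real.sin (t / 2) ^ 2 := by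
    rw [show t = 2 * (t/2) by ring, Real.cos_two_mul, Real.cos_sq']
    ring_nf
  have hrhs : 4 / π ^ 2 * ((t + π / 2) * (π - (t + π / 2))) = 1 - 4 * t ^ 2 / π ^ 2 := by
    field_simp; ring
  rw [hx, Real.sin_add_pi_div_two, hcos, hrhs]
  rw [hsin_sq] at hsq
  have h3 : 4 * t ^ 2 / π ^ 2 = 2 * (2 * t ^ 2 / π ^ 2) := by ring
  linarith [hsq]

/-- The coefficients match: the rejection constant over the Beta envelope equals
`c_k · (4/π²)^k`. -/
lemma coeff_eq (k : ℕ) (hk : 1 ≤ k) :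
    Real.sqrt π * 2 ^ (k - 1) * Gamma ((k : ℝ) / 2 + 1) ^ 2 / Gamma ((k : ℝ) + 3 / 2) /
      ((Gamma ((k : ℝ) + 1) * Gamma ((k : ℝ) + 1) / Gamma ((k : ℝ) + 1 + ((k : ℝ) + 1))) *
        π ^ (2 * k + 1)) =
    Gamma ((k : ℝ) / 2 + 1) / (Real.sqrt π * Gamma ((k : ℝ) / 2 + 1 / 2)) * (4 / π ^ 2) ^ k := by
  obtain ⟨m, rfl⟩ : ∃ m, k = m + 1 := ⟨k - 1, (Nat.succ_pred_eq_of_pos hk).symm⟩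
  have hπ := Real.pi_pos
  set s := Real.sqrt π with hs
  have hsπ : π = s ^ 2 := by rw [hs, Real.sq_sqrt hπ.le]
  have hspos : 0 < s := Real.sqrt_pos.mpr hπ
  have hG1 : 0 < Gamma ((↑(m+1) : ℝ) / 2 + 1) := Real.Gamma_pos_of_pos (by positivity)
  have hG2h : 0 < Gamma ((↑(m+1) : ℝ) / 2 + 1 / 2) := Real.Gamma_pos_of_pos (by positivity)
  have hGk1 : 0 < Gamma ((↑(m+1) : ℝ) + 1) := Real.Gamma_pos_of_pos (by positivity)
  have hG2k2 : 0 < Gamma ((↑(m+1) : ℝ) + 1 + ((↑(m+1) : ℝ) + 1)) :=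
    Real.Gamma_pos_of_pos (by positivity)
  have hG32 : 0 < Gamma ((↑(m+1) : ℝ) + 3 / 2) := Real.Gamma_pos_of_pos (by positivity)
  -- duplication with s = k/2 + 1/2
  have hd1 : Gamma ((↑(m+1) : ℝ) / 2 + 1 / 2) * Gamma ((↑(m+1) : ℝ) / 2 + 1) =
      Gamma ((↑(m+1) : ℝ) + 1) * ((2:ℝ) ^ (m+1))⁻¹ * s := by
    have h := Real.Gamma_mul_Gamma_add_half ((↑(m+1) : ℝ) / 2 + 1 / 2)
    rw [show ((↑(m+1) : ℝ) / 2 + 1 / 2) + 1 / 2 = (↑(m+1) : ℝ) / 2 + 1 by ring,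
      show 2 * ((↑(m+1) : ℝ) / 2 + 1 / 2) = (↑(m+1) : ℝ) + 1 by ring,
      show (1:ℝ) - ((↑(m+1) : ℝ) + 1) = -(↑(m+1) : ℝ) by ring] at h
    rw [h, Real.rpow_neg (by norm_num), Real.rpow_natCast, hs]
  -- duplication with s = k + 1
  have hd2 : Gamma ((↑(m+1) : ℝ) + 1) * Gamma ((↑(m+1) : ℝ) + 3 / 2) =
      Gamma ((↑(m+1) : ℝ) + 1 + ((↑(m+1) : ℝ) + 1)) * ((2:ℝ) ^ (2 * (m+1) + 1))⁻¹ * s := by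
    have h := Real.Gamma_mul_Gamma_add_half ((↑(m+1) : ℝ) + 1)
    rw [show (1:ℝ) - 2 * ((↑(m+1) : ℝ) + 1) = -((2 * (m+1) + 1 : ℕ) : ℝ) by push_cast; ring,
      show ((↑(m+1) : ℝ) + 1) + 1 / 2 = (↑(m+1) : ℝ) + 3 / 2 by ring,
      show 2 * ((↑(m+1) : ℝ) + 1) = (↑(m+1) : ℝ) + 1 + ((↑(m+1) : ℝ) + 1) by ring] at h
    rw [h, Real.rpow_neg (by norm_num), Real.rpow_natCast, hs]
  have e2h : Gamma ((↑(m+1) : ℝ) / 2 + 1 / 2) =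
      Gamma ((↑(m+1) : ℝ) + 1) * ((2:ℝ) ^ (m+1))⁻¹ * s / Gamma ((↑(m+1) : ℝ) / 2 + 1) := by
    rw [eq_div_iff hG1.ne']; linarith [hd1]
  have e32 : Gamma ((↑(m+1) : ℝ) + 3 / 2) =
      Gamma ((↑(m+1) : ℝ) + 1 + ((↑(m+1) : ℝ) + 1)) * ((2:ℝ) ^ (2 * (m+1) + 1))⁻¹ * s /
        Gamma ((↑(m+1) : ℝ) + 1) := by
    rw [eq_div_iff hGk1.ne']; linarith [hd2]
  rw [e2h, e32, hsπ]
  simp only [Nat.add_sub_cancel]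
  field_simp
  ring_nf
  rw [show (4:ℝ) ^ m = 2 ^ m * 2 ^ m by rw [← mul_pow]; norm_num]
  ring_nf
  field_simp
  rw [← mul_pow, mul_one_div_cancel hspos.ne', one_pow]

theorem sin_pow_le_envelope (k : ℕ) (hk : 1 ≤ k) (x : ℝ) (hx0 : 0 < x) (hxπ : x < π) :
    (Gamma ((k : ℝ) / 2 + 1) / (Real.sqrt π * Gamma ((k : ℝ) / 2 + 1 / 2))) * Real.sin x ^ k ≤
      (Real.sqrt π * 2 ^ (k - 1) * Gamma ((k : ℝ) / 2 + 1) ^ 2 / Gamma ((k : ℝ) + 3 / 2)) *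
        (x ^ k * (π - x) ^ k /
          ((Gamma ((k : ℝ) + 1) * Gamma ((k : ℝ) + 1) / Gamma ((k : ℝ) + 1 + ((k : ℝ) + 1))) *
            π ^ (2 * k + 1))) := by
  have hπ := Real.pi_pos
  have hG1 : 0 < Gamma ((k : ℝ) / 2 + 1) := Real.Gamma_pos_of_pos (by positivity)
  have hG2h : 0 < Gamma ((k : ℝ) / 2 + 1 / 2) := Real.Gamma_pos_of_pos (by positivity)
  have hc : 0 ≤ Gamma ((k : ℝ) / 2 + 1) / (Real.sqrt π * Gamma ((k : ℝ) / 2 + 1 / 2)) := by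
    positivity
  have hsin0 : 0 ≤ Real.sin x := Real.sin_nonneg_of_nonneg_of_le_pi hx0.le hxπ.le
  have hkey : Real.sin x ^ k ≤ (4 / π ^ 2 * (x * (π - x))) ^ k :=
    pow_le_pow_left₀ hsin0 (sin_le_parab hx0 hxπ) k
  have step : (Gamma ((k : ℝ) / 2 + 1) / (Real.sqrt π * Gamma ((k : ℝ) / 2 + 1 / 2))) *
      Real.sin x ^ k ≤
      (Gamma ((k : ℝ) / 2 + 1) / (Real.sqrt π * Gamma ((k : ℝ) / 2 + 1 / 2))) *
        (4 / π ^ 2 * (x * (π - x))) ^ k :=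
    mul_le_mul_of_nonneg_left hkey hc
  refine step.trans (le_of_eq ?_)
  have hco := coeff_eq k hk
  calc (Gamma ((k : ℝ) / 2 + 1) / (Real.sqrt π * Gamma ((k : ℝ) / 2 + 1 / 2))) *
        (4 / π ^ 2 * (x * (π - x))) ^ k
      = (Gamma ((k : ℝ) / 2 + 1) / (Real.sqrt π * Gamma ((k : ℝ) / 2 + 1 / 2)) * (4 / π ^ 2) ^ k) *
        (x ^ k * (π - x) ^ k) := by rw [mul_pow, mul_pow]; ring
    _ = (Real.sqrt π * 2 ^ (k - 1) * Gamma ((k : ℝ) / 2 + 1) ^ 2 / Gamma ((k : ℝ) + 3 / 2) /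
          ((Gamma ((k : ℝ) + 1) * Gamma ((k : ℝ) + 1) / Gamma ((k : ℝ) + 1 + ((k : ℝ) + 1))) *
            π ^ (2 * k + 1))) * (x ^ k * (π - x) ^ k) := by rw [hco]
    _ = _ := by rw [div_div]; ring
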